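/- arXiv:1310.0113 — 3 statements merged into one kernel-verified Lean document; each statement's English description precedes it below -/
import Mathlib

section
/- A group of order 8 admits an automorphism of order 3 if and only if it is isomorphic to the elementary abelian group (ℤ/2ℤ)^3 or to the quaternion group Q8. -/
open Finset MulAction

lemma perm_card_modEq {α : Type*} [Fintype α] [DecidableEq α] {p : ℕ} [hp : Fact p.Prime]
    (σ : Equiv.Perm α) (hσ : σ ^ p = 1) :
    Fintype.card α ≡ (Finset.univ.filter fun x => σ x = x).card [MOD p] := by
  classical
  set H := Subgroup.zpowers σ with hH
  have hPG : IsPGroup p H := by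
    intro g
    refine ⟨1, ?_⟩
    obtain ⟨n, hn⟩ := g.2
    simp only at hn
    have hc : (g : Equiv.Perm α) ^ p = 1 := by
      rw [← hn, ← zpow_natCast, ← zpow_mul, mul_comm, zpow_mul, zpow_natCast, hσ, one_zpow]
    rw [pow_one]
    exact Subtype.ext (by push_cast; exact hc)
  have key := hPG.card_modEq_card_fixedPoints α
  have hfix : fixedPoints H α = {x | σ x = x} := by
    ext x
    constructor
    · intro hx
      exact hx ⟨σ, Subgroup.mem_zpowers σ⟩
    · intro hx g
      simp only [Set.mem_setOf_eq] at hx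
      obtain ⟨n, hn⟩ := g.2
      simp only at hn
      have hm : ∀ m : ℕ, (σ ^ m) x = x := by
        intro m
        induction m with
        | zero => simp
        | succ k ih => rw [pow_succ, Equiv.Perm.mul_apply, hx, ih]
      have h2 : ∀ m : ℤ, (σ ^ m) x = x := by
        intro m
        induction m using Int.rec with
        | ofNat k => simpa using hm k
        | negSucc k =>
          have := hm (k+1)
          rw [zpow_negSucc]
          conv_lhs => rw [← this]
          simp
      have : (g : Equiv.Perm α) x = x := by rw [← hn]; exact h2 n
      simpa [MulAction.mem_fixedPoints] using (show g • x = x from this)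
  rw [hfix] at key
  have hcard : Nat.card {x : α // σ x = x} = (Finset.univ.filter fun x => σ x = x).card := by
    simp [Nat.card_eq_fintype_card, Fintype.card_subtype]
  rw [Nat.card_eq_fintype_card] at key
  calc Fintype.card α ≡ Nat.card {x : α | σ x = x} [MOD p] := key
    _ = _ := hcard

lemma order_filter_modEq {G : Type*} [Group G] [Fintype G] [DecidableEq G] {p : ℕ}
    [Fact p.Prime] (σ : Equiv.Perm G) (hσ : σ ^ p = 1)
    (hpres : ∀ g, orderOf (σ g) = orderOf g) (d : ℕ) :
    (Finset.univ.filter fun g : G => orderOf g = d).card ≡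
      (Finset.univ.filter fun g : G => σ g = g ∧ orderOf g = d).card [MOD p] := by
  classical
  have hiff : ∀ x : G, orderOf x = d ↔ orderOf (σ x) = d := fun x => by rw [hpres]
  set π : Equiv.Perm {g : G // orderOf g = d} := σ.subtypePerm (fun x => (hiff x).symm) with hπ
  have hπp : π ^ p = 1 := by
    ext ⟨x, hx⟩
    rw [hπ, Equiv.Perm.subtypePerm_pow]
    simp [hσ]
  have key := perm_card_modEq π hπp
  have h1 : Fintype.card {g : G // orderOf g = d}
      = (Finset.univ.filter fun g : G => orderOf g = d).card := Fintype.card_subtype _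
  have h2 : (Finset.univ.filter fun x : {g : G // orderOf g = d} => π x = x).card
      = (Finset.univ.filter fun g : G => σ g = g ∧ orderOf g = d).card := by
    rw [← Fintype.card_subtype, ← Fintype.card_subtype]
    apply Fintype.card_congr
    refine (Equiv.subtypeEquivRight fun x => ?_).trans
      ((Equiv.subtypeSubtypeEquivSubtypeInter (fun g : G => orderOf g = d)
        (fun g => σ g = g)).trans (Equiv.subtypeEquivRight fun g => and_comm))
    rw [hπ, Subtype.ext_iff]
    simp [Equiv.Perm.subtypePerm_apply]
  rw [← h1, ← h2]
  exact key


open Subgroup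

-- Q8 recognition from generators and relations
lemma q8_iso {G : Type*} [Group G] [Fintype G] (hG : Fintype.card G = 8)
    (x y : G) (hx : orderOf x = 4) (hy2 : y * y = x * x)
    (hconj : x * y = y * x⁻¹) (hy : y ∉ zpowers x) :
    Nonempty (G ≃* QuaternionGroup 2) := by
  have hx4 : x ^ 4 = 1 := by rw [← hx]; exact pow_orderOf_eq_one x
  -- powers of x commute past y
  have hc : ∀ m : ℕ, x ^ m * y = y * x ^ (3 * m) := by
    intro m
    induction m with
    | zero => simp
    | succ k ih =>
      have hinv : x⁻¹ = x ^ 3 := by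
        rw [inv_eq_iff_mul_eq_one, ← pow_succ']
        exact hx4
      calc x ^ (k+1) * y = x ^ k * (x * y) := by rw [pow_succ, mul_assoc]
        _ = x ^ k * (y * x⁻¹) := by rw [hconj]
        _ = (x ^ k * y) * x⁻¹ := by rw [mul_assoc]
        _ = y * x ^ (3*k) * x ^ 3 := by rw [ih, hinv]
        _ = y * x ^ (3*(k+1)) := by rw [mul_assoc, ← pow_add]; ring_nf
  have hpow : ∀ s t : ℕ, s ≡ t [MOD 4] → x ^ s = x ^ t := by
    intro s t hst
    rw [pow_eq_pow_iff_modEq, hx]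
    exact hst
  -- the homomorphism
  let F : QuaternionGroup 2 → G := fun t =>
    match t with
    | .a i => x ^ i.val
    | .xa i => y * x ^ i.val
  have hmul : ∀ s t : QuaternionGroup 2, F (s * t) = F s * F t := by
    rintro (i | i) (j | j)
    · show x ^ (i + j).val = x ^ i.val * x ^ j.val
      rw [← pow_add]
      apply hpow
      show (i + j).val % 4 = (i.val + j.val) % 4
      revert i j; decide
    · show y * x ^ (j - i).val = x ^ i.val * (y * x ^ j.val)
      rw [← mul_assoc, hc, mul_assoc, ← pow_add]
      congr 1
      apply hpow
      show (j - i).val % 4 = (3 * i.val + j.val) % 4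
      revert i j; decide
    · show y * x ^ (i + j).val = y * x ^ i.val * x ^ j.val
      rw [mul_assoc, ← pow_add]
      congr 1
      apply hpow
      show (i + j).val % 4 = (i.val + j.val) % 4
      revert i j; decide
    · show x ^ (((2:ℕ) : ZMod (2*2)) + j - i).val = y * x ^ i.val * (y * x ^ j.val)
      have key : x ^ (((2:ℕ) : ZMod (2*2)) + j - i).val = x ^ (2 + (3 * i.val + j.val)) := by
        apply hpow
        show (((2:ℕ) : ZMod (2*2)) + j - i).val % 4 = (2 + (3 * i.val + j.val)) % 4
        revert i j; decide
      have h1 : y * x ^ i.val * (y * x ^ j.val) = y * ((x ^ i.val * y) * x ^ j.val) := by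
        simp [mul_assoc]
      rw [h1, hc, show y * (y * x ^ (3*i.val) * x ^ j.val) = (y*y) * (x^(3*i.val) * x^j.val) by
        simp [mul_assoc], hy2, key, pow_add, pow_add, pow_two]
  let Fhom : QuaternionGroup 2 →* G := { toFun := F, map_one' := by show x ^ (0 : ZMod (2*2)).val = 1; simp, map_mul' := hmul }
  have hinj : Function.Injective Fhom := by
    rw [injective_iff_map_eq_one]
    rintro (i | i) hi
    · show QuaternionGroup.a i = QuaternionGroup.a 0
      have : x ^ i.val = 1 := hi
      have h4 : (4 : ℕ) ∣ i.val := by rw [← hx]; exact orderOf_dvd_of_pow_eq_one this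
      have hv : i.val = 0 := Nat.eq_zero_of_dvd_of_lt h4 (ZMod.val_lt i)
      have : i = 0 := (ZMod.val_eq_zero i).mp hv
      rw [this]
    · exfalso
      have : y * x ^ i.val = 1 := hi
      have : y = (x ^ i.val)⁻¹ := by
        rw [eq_inv_iff_mul_eq_one]; exact this
      exact hy (this ▸ inv_mem (pow_mem (mem_zpowers x) i.val))
  have hbij : Function.Bijective Fhom := by
    rw [Fintype.bijective_iff_injective_and_card]
    exact ⟨hinj, by rw [QuaternionGroup.card, hG]⟩
  exact ⟨(MulEquiv.ofBijective Fhom hbij).symm⟩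

open Finset in
lemma q8_recognize {G : Type*} [Group G] [Fintype G] [DecidableEq G] (hG : Fintype.card G = 8)
    (h2 : (univ.filter fun g : G => orderOf g = 2).card = 1)
    (h4 : (univ.filter fun g : G => orderOf g = 4).card = 6) :
    Nonempty (G ≃* QuaternionGroup 2) := by
  -- get x of order 4
  obtain ⟨x, hx⟩ : ∃ x : G, orderOf x = 4 := by
    have : (univ.filter fun g : G => orderOf g = 4).Nonempty := by
      rw [← Finset.card_pos, h4]; norm_num
    obtain ⟨x, hx⟩ := this
    exact ⟨x, (Finset.mem_filter.mp hx).2⟩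
  set H := Subgroup.zpowers x with hH
  have hcardH : Fintype.card H = 4 := by rw [Fintype.card_zpowers, hx]
  have hidx : H.index = 2 := by
    have := Subgroup.card_mul_index H
    rw [Nat.card_eq_fintype_card, Nat.card_eq_fintype_card, hcardH, hG] at this
    omega
  -- get y of order 4 not in H
  obtain ⟨y, hy4, hyH⟩ : ∃ y : G, orderOf y = 4 ∧ y ∉ H := by
    classical
    have hTcard : (univ.filter fun g : G => g ∈ H).card = 4 := by
      rw [← hcardH]
      exact (Fintype.card_subtype _).symm
    have hsub : ¬ (univ.filter fun g : G => orderOf g = 4) ⊆ (univ.filter fun g : G => g ∈ H) := by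
      intro hc
      have := Finset.card_le_card hc
      rw [h4, hTcard] at this
      omega
    obtain ⟨y, hy1, hy2⟩ := Finset.not_subset.mp hsub
    exact ⟨y, (Finset.mem_filter.mp hy1).2, by simpa using hy2⟩
  -- unique element of order 2
  have huniq : ∀ a b : G, orderOf a = 2 → orderOf b = 2 → a = b := by
    intro a b ha hb
    exact Finset.card_le_one.mp (le_of_eq h2) a (by simp [ha]) b (by simp [hb])
  have hx2 : orderOf (x ^ 2) = 2 := by rw [orderOf_pow, hx]; decide
  have hy2o : orderOf (y ^ 2) = 2 := by rw [orderOf_pow, hy4]; decide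
  have hsq : y * y = x * x := by
    have := huniq (y ^ 2) (x ^ 2) hy2o hx2
    rwa [pow_two, pow_two] at this
  -- conjugate of x by y
  set w := y * x * y⁻¹ with hw
  have hwo : orderOf w = 4 := by
    have h8 : orderOf ((MulAut.conj y).toMonoidHom x) = orderOf x :=
      orderOf_injective _ (MulEquiv.injective _) x
    rw [← hx]
    exact h8
  have hxH : x ∈ H := Subgroup.mem_zpowers x
  have hyxH : y * x ∉ H := by
    rw [Subgroup.mul_mem_iff_of_index_two hidx]
    simp [hxH, hyH]
  have hwH : w ∈ H := by
    rw [hw, Subgroup.mul_mem_iff_of_index_two hidx]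
    simp [hyxH, hyH]
  -- w = x or w = x⁻¹
  have hwx : w = x ∨ w = x⁻¹ := by
    obtain ⟨n, hn⟩ := mem_powers_iff_mem_zpowers.mpr hwH
    simp only at hn
    have hn' : x ^ (n % 4) = w := by rw [← hn, ← hx]; exact pow_mod_orderOf x n
    have hlt : n % 4 < 4 := Nat.mod_lt _ (by norm_num)
    set m := n % 4 with hm
    interval_cases m
    · exfalso; rw [pow_zero] at hn'; rw [← hn'] at hwo; simp at hwo
    · left; rw [← hn', pow_one]
    · exfalso; rw [← hn'] at hwo; rw [hwo] at hx2; omega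
    · right
      rw [← hn', eq_inv_iff_mul_eq_one, ← pow_succ]
      have h9 : x ^ 4 = 1 := by rw [← hx]; exact pow_orderOf_eq_one x
      exact h9
  have hconj : x * y = y * x⁻¹ := by
    rcases hwx with hcase | hcase
    · -- commuting case: contradiction
      exfalso
      have hcomm : Commute x y := by
        have : y * x = x * y := by
          have := hcase
          rw [hw] at this
          calc y * x = (y * x * y⁻¹) * y := by group
            _ = x * y := by rw [this]
        exact this.symm
      have hsq1 : (x * y⁻¹) * (x * y⁻¹) = 1 := by
        have h1 : (x * y⁻¹) * (x * y⁻¹) = (x * x) * (y⁻¹ * y⁻¹) := by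
          have := hcomm.inv_right
          calc (x * y⁻¹) * (x * y⁻¹) = x * (y⁻¹ * x) * y⁻¹ := by group
            _ = x * (x * y⁻¹) * y⁻¹ := by rw [this.eq]
            _ = (x * x) * (y⁻¹ * y⁻¹) := by group
        rw [h1, ← hsq]
        group
      have hne : x * y⁻¹ ≠ 1 := by
        intro hc
        apply hyH
        have : x = y := by
          have := hc
          rwa [mul_inv_eq_one] at this
        rw [← this]; exact hxH
      have ho2 : orderOf (x * y⁻¹) = 2 := by
        apply orderOf_eq_prime
        · rw [pow_two]; exact hsq1
        · exact hne
      have hxy : x * y⁻¹ = x ^ 2 := huniq _ _ ho2 hx2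
      apply hyH
      rw [pow_two] at hxy
      have h5 : y⁻¹ = x := mul_left_cancel hxy
      have hy_eq : y = x⁻¹ := by rw [← h5, inv_inv]
      rw [hy_eq]
      exact inv_mem hxH
    · -- w = x⁻¹
      have h6 : y * x * y⁻¹ = x⁻¹ := by rw [← hcase]
      have h7 : x = y * x⁻¹ * y⁻¹ := by
        have := congrArg (fun t => t⁻¹) h6
        simp only [mul_inv_rev, inv_inv] at this
        exact this.symm.trans (mul_assoc y x⁻¹ y⁻¹).symm
      calc x * y = (y * x⁻¹ * y⁻¹) * y := by rw [← h7]
        _ = y * x⁻¹ := by group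
  exact q8_iso hG x y hx hsq hconj hyH


lemma elem_abelian {G : Type*} [Group G] [Fintype G] (hG : Fintype.card G = 8)
    (hsq : ∀ g : G, g * g = 1) : Nonempty (G ≃* Multiplicative (Fin 3 → ZMod 2)) := by
  letI : CommGroup G :=
    { ‹Group G› with
      mul_comm := Commute.of_orderOf_dvd_two fun g =>
        orderOf_dvd_of_pow_eq_one (by rw [pow_two]; exact hsq g) }
  letI : Module (ZMod 2) (Additive G) := AddCommGroup.zmodModule (by
    intro x
    rw [two_nsmul]
    exact hsq x.toMul)
  haveI : Module.Finite (ZMod 2) (Additive G) := Module.Finite.of_finite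
  have hcard : Fintype.card (Additive G) = 2 ^ Module.finrank (ZMod 2) (Additive G) := by
    have := Module.card_eq_pow_finrank (K := ZMod 2) (V := Additive G)
    simpa using this
  have hAG : Fintype.card (Additive G) = 8 :=
    (Fintype.card_congr Additive.toMul).trans hG
  have hfr : Module.finrank (ZMod 2) (Additive G) = 3 := by
    have h9 : 2 ^ Module.finrank (ZMod 2) (Additive G) = 2 ^ 3 :=
      (hcard.symm.trans hAG).trans (by norm_num)
    exact Nat.pow_right_injective (by norm_num) h9
  have hfr2 : Module.finrank (ZMod 2) (Fin 3 → ZMod 2) = 3 := by simp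
  have e : Additive G ≃ₗ[ZMod 2] (Fin 3 → ZMod 2) :=
    LinearEquiv.ofFinrankEq _ _ (by rw [hfr, hfr2])
  exact ⟨AddEquiv.toMultiplicativeRight e.toAddEquiv⟩


def rotAdd : (Fin 3 → ZMod 2) ≃+ (Fin 3 → ZMod 2) where
  toFun f := f ∘ finRotate 3
  invFun f := f ∘ (finRotate 3).symm
  left_inv f := funext fun i => congrArg f ((finRotate 3).apply_symm_apply i)
  right_inv f := funext fun i => congrArg f ((finRotate 3).symm_apply_apply i)
  map_add' _ _ := rfl

def rotMul : MulAut (Multiplicative (Fin 3 → ZMod 2)) :=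
  AddEquiv.toMultiplicative rotAdd

lemma rotMul_order : orderOf rotMul = 3 := by
  have key : ∀ x, rotMul (rotMul (rotMul x)) = x := by decide
  have h3 : rotMul ^ 3 = 1 := by
    apply MulEquiv.ext
    intro x
    exact key x
  have h1 : rotMul ≠ 1 := by
    intro hc
    have := MulEquiv.ext_iff.mp hc
    revert this
    decide
  exact orderOf_eq_prime h3 h1


open QuaternionGroup

def q8fun : QuaternionGroup 2 → QuaternionGroup 2
  | .a i => ![QuaternionGroup.a 0, .xa 0, .a 2, .xa 2] i
  | .xa i => ![QuaternionGroup.xa 3, .a 3, .xa 1, .a 1] i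

def q8rot : MulAut (QuaternionGroup 2) where
  toFun := q8fun
  invFun := q8fun ∘ q8fun
  left_inv := by decide
  right_inv := by decide
  map_mul' := by decide

lemma q8rot_order : orderOf q8rot = 3 := by
  have key : ∀ x, q8rot (q8rot (q8rot x)) = x := by decide
  have h3 : q8rot ^ 3 = 1 := MulEquiv.ext fun x => key x
  have h1 : q8rot ≠ 1 := by
    intro hc
    have := MulEquiv.ext_iff.mp hc
    revert this
    decide
  exact orderOf_eq_prime h3 h1


open Finset in
lemma forward_case {G : Type*} [Group G] [Fintype G] [DecidableEq G]
    (hG : Fintype.card G = 8) (φ : MulAut G) (hφ : orderOf φ = 3) :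
    Nonempty (G ≃* Multiplicative (Fin 3 → ZMod 2)) ∨ Nonempty (G ≃* QuaternionGroup 2) := by
  haveI : Fact (Nat.Prime 3) := ⟨by norm_num⟩
  haveI : Fact (Nat.Prime 2) := ⟨by norm_num⟩
  set σ : Equiv.Perm G := MulAut.toPerm (M := G) φ with hσdef
  have hσ3 : σ ^ 3 = 1 := by rw [hσdef, ← map_pow, ← hφ, pow_orderOf_eq_one, map_one]
  have hpres : ∀ g : G, orderOf (σ g) = orderOf g := fun g =>
    orderOf_injective φ.toMonoidHom φ.injective g
  -- the fixed-point subgroup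
  set F : Subgroup G :=
    { carrier := {g | σ g = g}
      one_mem' := by show σ 1 = 1; exact map_one φ
      mul_mem' := fun {a b} ha hb => by
        show σ (a * b) = a * b
        have : σ (a * b) = σ a * σ b := map_mul φ a b
        rw [this, ha, hb]
      inv_mem' := fun {a} ha => by
        show σ a⁻¹ = a⁻¹
        have : σ a⁻¹ = (σ a)⁻¹ := map_inv φ a
        rw [this, ha] } with hF
  letI : Fintype F := Fintype.ofFinite F
  have e1 : (F : Type _) ≃ {x : G // σ x = x} :=
    Equiv.subtypeEquivRight (fun x : G => (Iff.rfl : x ∈ F ↔ σ x = x))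
  have hFcard : Nat.card F = (univ.filter fun g : G => σ g = g).card := by
    rw [Nat.card_congr e1, Nat.card_eq_fintype_card, Fintype.card_subtype]
  have hNatG : Nat.card G = 8 := by rw [Nat.card_eq_fintype_card, hG]
  have hdvd : Nat.card F ∣ 8 := by
    have := Subgroup.card_subgroup_dvd_card F
    rwa [hNatG] at this
  have hmod : 8 ≡ (univ.filter fun g : G => σ g = g).card [MOD 3] := by
    rw [← hG]; exact perm_card_modEq σ hσ3
  have hne8 : (univ.filter fun g : G => σ g = g).card ≠ 8 := by
    intro hc
    have huniv : (univ.filter fun g : G => σ g = g) = univ := by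
      apply Finset.eq_univ_of_card
      rw [hc, hG]
    have : φ = 1 := by
      apply MulEquiv.ext
      intro g
      have hg : g ∈ (univ.filter fun g : G => σ g = g) := by
        rw [huniv]; exact Finset.mem_univ g
      exact (Finset.mem_filter.mp hg).2
    rw [this, orderOf_one] at hφ
    omega
  have hf2 : (univ.filter fun g : G => σ g = g).card = 2 := by
    set f := (univ.filter fun g : G => σ g = g).card with hfdef
    have h1 : f ∣ 8 := hFcard ▸ hdvd
    have h2 : f % 3 = 8 % 3 := hmod.symm
    have h3 : f ≤ 8 := Nat.le_of_dvd (by norm_num) h1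
    interval_cases f <;> omega
  -- square of every fixed point is 1
  have hfixsq : ∀ g : G, σ g = g → g * g = 1 := by
    intro g hg
    have hgF : g ∈ F := hg
    have hcF : Fintype.card F = 2 := by
      rw [← Nat.card_eq_fintype_card, hFcard, hf2]
    have : (⟨g, hgF⟩ : F) ^ Fintype.card F = 1 := pow_card_eq_one
    rw [hcF] at this
    have := congrArg (Subtype.val) this
    rw [pow_two] at this
    exact this
  -- the unique nontrivial fixed point z
  obtain ⟨z, hzmem, hzne⟩ :=
    Finset.exists_mem_ne (s := univ.filter fun g : G => σ g = g)
      (by rw [hf2]; norm_num) 1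
  have hzfix : σ z = z := (Finset.mem_filter.mp hzmem).2
  have hzord : orderOf z = 2 := orderOf_eq_prime (by rw [pow_two]; exact hfixsq z hzfix) hzne
  -- fixed-point counts in each order class
  have hfix2 : (univ.filter fun g : G => σ g = g ∧ orderOf g = 2).card = 1 := by
    rw [Finset.card_eq_one]
    refine ⟨z, ?_⟩
    apply Finset.eq_singleton_iff_unique_mem.mpr
    constructor
    · exact Finset.mem_filter.mpr ⟨Finset.mem_univ z, hzfix, hzord⟩
    · intro g hg
      obtain ⟨-, hgfix, hgord⟩ := Finset.mem_filter.mp hg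
      by_contra hne
      have h1z : ({1, z, g} : Finset G) ⊆ (univ.filter fun g : G => σ g = g) := by
        intro a ha
        simp only [Finset.mem_insert, Finset.mem_singleton] at ha
        rcases ha with rfl | rfl | rfl
        · exact Finset.mem_filter.mpr ⟨Finset.mem_univ _, map_one φ⟩
        · exact Finset.mem_filter.mpr ⟨Finset.mem_univ _, hzfix⟩
        · exact Finset.mem_filter.mpr ⟨Finset.mem_univ _, hgfix⟩
      have hzg : z ≠ g := fun hc => hne hc.symm
      have h1z' : (1 : G) ≠ z := fun hc => hzne hc.symm
      have h1g : (1 : G) ≠ g := by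
        intro hc
        rw [← hc, orderOf_one] at hgord
        omega
      have hcard3 : ({1, z, g} : Finset G).card = 3 := by
        rw [Finset.card_insert_of_notMem (by simp [h1z', h1g]),
          Finset.card_insert_of_notMem (by simp [hzg]), Finset.card_singleton]
      have := Finset.card_le_card h1z
      rw [hcard3, hf2] at this
      omega
  have hfix4 : (univ.filter fun g : G => σ g = g ∧ orderOf g = 4).card = 0 := by
    rw [Finset.card_eq_zero, Finset.filter_eq_empty_iff]
    rintro g - ⟨hgfix, hgord⟩
    have : orderOf g ∣ 2 := orderOf_dvd_of_pow_eq_one (by rw [pow_two]; exact hfixsq g hgfix)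
    rw [hgord] at this
    norm_num at this
  have hfix8 : (univ.filter fun g : G => σ g = g ∧ orderOf g = 8).card = 0 := by
    rw [Finset.card_eq_zero, Finset.filter_eq_empty_iff]
    rintro g - ⟨hgfix, hgord⟩
    have : orderOf g ∣ 2 := orderOf_dvd_of_pow_eq_one (by rw [pow_two]; exact hfixsq g hgfix)
    rw [hgord] at this
    norm_num at this
  -- order counts mod 3
  have c2 : (univ.filter fun g : G => orderOf g = 2).card % 3 = 1 := by
    have := (order_filter_modEq σ hσ3 hpres 2)
    rw [hfix2] at this
    exact this
  have c4 : 3 ∣ (univ.filter fun g : G => orderOf g = 4).card := by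
    have := (order_filter_modEq σ hσ3 hpres 4)
    rw [hfix4] at this
    exact (Nat.modEq_zero_iff_dvd).mp this
  have c8 : 3 ∣ (univ.filter fun g : G => orderOf g = 8).card := by
    have := (order_filter_modEq σ hσ3 hpres 8)
    rw [hfix8] at this
    exact (Nat.modEq_zero_iff_dvd).mp this
  -- parity via inversion
  set τ : Equiv.Perm G := Equiv.inv G with hτdef
  have hτ2 : τ ^ 2 = 1 := by
    ext g
    show τ (τ g) = g
    exact inv_inv g
  have hτpres : ∀ g : G, orderOf (τ g) = orderOf g := fun g => orderOf_inv g
  have p4 : 2 ∣ (univ.filter fun g : G => orderOf g = 4).card := by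
    have h0 : (univ.filter fun g : G => τ g = g ∧ orderOf g = 4).card = 0 := by
      rw [Finset.card_eq_zero, Finset.filter_eq_empty_iff]
      rintro g - ⟨hgfix, hgord⟩
      have hinv : g⁻¹ = g := hgfix
      have : g * g = 1 := by nth_rewrite 2 [← hinv]; exact mul_inv_cancel g
      have : orderOf g ∣ 2 := orderOf_dvd_of_pow_eq_one (by rwa [pow_two])
      rw [hgord] at this
      norm_num at this
    have := (order_filter_modEq τ hτ2 hτpres 4)
    rw [h0] at this
    exact (Nat.modEq_zero_iff_dvd).mp this
  -- partition of the group by element orders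
  have hcases : ∀ g : G, orderOf g = 1 ∨ orderOf g = 2 ∨ orderOf g = 4 ∨ orderOf g = 8 := by
    intro g
    have h1 : orderOf g ∣ 8 := hG ▸ orderOf_dvd_card
    have h2 : 0 < orderOf g := orderOf_pos g
    have h3 : orderOf g ≤ 8 := Nat.le_of_dvd (by norm_num) h1
    interval_cases (orderOf g) <;> omega
  have n1 : (univ.filter fun g : G => orderOf g = 1).card = 1 := by
    rw [Finset.card_eq_one]
    refine ⟨1, ?_⟩
    apply Finset.eq_singleton_iff_unique_mem.mpr
    refine ⟨Finset.mem_filter.mpr ⟨Finset.mem_univ _, orderOf_one⟩, fun g hg => ?_⟩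
    exact orderOf_eq_one_iff.mp (Finset.mem_filter.mp hg).2
  have dC : Disjoint (univ.filter fun g : G => orderOf g = 1)
      (univ.filter fun g : G => orderOf g = 2) := by
    rw [Finset.disjoint_left]
    intro a ha hb
    simp only [Finset.mem_filter] at ha hb
    omega
  have dB : Disjoint ((univ.filter fun g : G => orderOf g = 1)
        ∪ (univ.filter fun g : G => orderOf g = 2))
      (univ.filter fun g : G => orderOf g = 4) := by
    rw [Finset.disjoint_left]
    intro a ha hb
    simp only [Finset.mem_union, Finset.mem_filter] at ha hb
    omega
  have dA : Disjoint ((univ.filter fun g : G => orderOf g = 1)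
        ∪ (univ.filter fun g : G => orderOf g = 2)
        ∪ (univ.filter fun g : G => orderOf g = 4))
      (univ.filter fun g : G => orderOf g = 8) := by
    rw [Finset.disjoint_left]
    intro a ha hb
    simp only [Finset.mem_union, Finset.mem_filter] at ha hb
    omega
  have hsplit : (univ : Finset G) = (univ.filter fun g : G => orderOf g = 1)
      ∪ (univ.filter fun g : G => orderOf g = 2)
      ∪ (univ.filter fun g : G => orderOf g = 4)
      ∪ (univ.filter fun g : G => orderOf g = 8) := by
    ext g
    simp only [Finset.mem_union, Finset.mem_filter, Finset.mem_univ, true_and, iff_true]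
    have := hcases g
    tauto
  have htotal : (univ.filter fun g : G => orderOf g = 1).card
      + (univ.filter fun g : G => orderOf g = 2).card
      + (univ.filter fun g : G => orderOf g = 4).card
      + (univ.filter fun g : G => orderOf g = 8).card = 8 := by
    have h8 : (univ : Finset G).card = 8 := by rw [Finset.card_univ, hG]
    rw [hsplit, Finset.card_union_of_disjoint dA, Finset.card_union_of_disjoint dB,
      Finset.card_union_of_disjoint dC] at h8
    omega
  -- no elements of order 8
  have n8 : (univ.filter fun g : G => orderOf g = 8).card = 0 := by
    by_contra hc
    obtain ⟨g, hg⟩ := Finset.card_ne_zero.mp hc |>.exists_mem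
    have hgord : orderOf g = 8 := (Finset.mem_filter.mp hg).2
    haveI : IsCyclic G := isCyclic_of_orderOf_eq_card g
      (by rw [hgord, Nat.card_eq_fintype_card, hG])
    have htot := IsCyclic.card_orderOf_eq_totient (α := G) (d := 8) (by rw [hG])
    rw [htot, show Nat.totient 8 = 4 by decide] at c8
    norm_num at c8
  rcases (show (univ.filter fun g : G => orderOf g = 4).card = 0
      ∨ ((univ.filter fun g : G => orderOf g = 4).card = 6
        ∧ (univ.filter fun g : G => orderOf g = 2).card = 1) by omega) with h40 | ⟨h46, h21⟩
  · -- elementary abelian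
    left
    apply elem_abelian hG
    intro g
    have h4e : g ∉ (univ.filter fun g : G => orderOf g = 4) := by
      rw [Finset.card_eq_zero.mp h40]
      exact Finset.notMem_empty g
    have h8e : g ∉ (univ.filter fun g : G => orderOf g = 8) := by
      rw [Finset.card_eq_zero.mp n8]
      exact Finset.notMem_empty g
    simp only [Finset.mem_filter, Finset.mem_univ, true_and] at h4e h8e
    have : orderOf g ∣ 2 := by
      rcases hcases g with h | h | h | h
      · rw [h]; norm_num
      · rw [h]
      · exact absurd h h4e
      · exact absurd h h8e
    have := orderOf_dvd_iff_pow_eq_one.mp this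
    rwa [pow_two] at this
  · right
    exact q8_recognize hG h21 h46

/-- A group of order 8 admits an automorphism of order 3 if and only if it is
isomorphic to the elementary abelian group `(ℤ/2ℤ)^3` or to the quaternion group `Q8`. -/
theorem order8_aut_of_order_three_iff (G : Type*) [Group G] (h : Nat.card G = 8) :
    (∃ φ : MulAut G, orderOf φ = 3) ↔
      (Nonempty (G ≃* Multiplicative (Fin 3 → ZMod 2)) ∨
        Nonempty (G ≃* QuaternionGroup 2)) := by
  haveI : Finite G := Nat.finite_of_card_ne_zero (by omega)
  letI : Fintype G := Fintype.ofFinite G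
  letI : DecidableEq G := Classical.decEq G
  have hG : Fintype.card G = 8 := by rw [← Nat.card_eq_fintype_card, h]
  constructor
  · rintro ⟨φ, hφ⟩
    exact forward_case hG φ hφ
  · rintro (he | he)
    · obtain ⟨e⟩ := he
      refine ⟨(MulAut.congr e).symm rotMul, ?_⟩
      exact (orderOf_injective ((MulAut.congr e).symm).toMonoidHom
        (MulEquiv.injective _) rotMul).trans rotMul_order
    · obtain ⟨e⟩ := he
      refine ⟨(MulAut.congr e).symm q8rot, ?_⟩
      exact (orderOf_injective ((MulAut.congr e).symm).toMonoidHom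
        (MulEquiv.injective _) q8rot).trans q8rot_order
end

section
/- For every injective group homomorphism φ from the cyclic group ℤ/3ℤ to the automorphism group of (ℤ/2ℤ)^3, the semidirect product (ℤ/2ℤ)^3 ⋊_φ ℤ/3ℤ is isomorphic to A4 × C2, the direct product of the alternating group on 4 letters with a cyclic group of order 2. -/
namespace SdpA4C2Aux

abbrev V := Multiplicative (Fin 3 → ZMod 2)

def ee (i : Fin 3) : V := Multiplicative.ofAdd (Pi.single i 1)

def gapp {G : Type*} [Group G] (a0 a1 a2 : G) (v : V) : G :=
  a0 ^ (Multiplicative.toAdd v 0).val * a1 ^ (Multiplicative.toAdd v 1).val *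
    a2 ^ (Multiplicative.toAdd v 2).val

def sfix (v : V) : V := gapp (ee 0) (ee 2) (ee 1 * ee 2) v

set_option synthInstance.maxHeartbeats 1000000 in
set_option synthInstance.maxSize 2000 in
set_option maxHeartbeats 10000000 in
set_option maxRecDepth 100000 in
theorem core : ∀ s0 s1 s2 : V,
    (gapp s0 s1 s2 (gapp s0 s1 s2 s0) = ee 0) →
    (gapp s0 s1 s2 (gapp s0 s1 s2 s1) = ee 1) →
    (gapp s0 s1 s2 (gapp s0 s1 s2 s2) = ee 2) →
    ¬(s0 = ee 0 ∧ s1 = ee 1 ∧ s2 = ee 2) →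
    ∃ t0 t1 t2 : V, (∀ v, gapp t0 t1 t2 v = 1 → v = 1) ∧
      (gapp t0 t1 t2 s0 = sfix (gapp t0 t1 t2 (ee 0))) ∧
      (gapp t0 t1 t2 s1 = sfix (gapp t0 t1 t2 (ee 1))) ∧
      (gapp t0 t1 t2 s2 = sfix (gapp t0 t1 t2 (ee 2))) := by
  decide

lemma sq_V : ∀ x : V, x ^ 2 = 1 := by decide

lemma pow_val_add {G : Type*} [Monoid G] {x : G} (h : x ^ 2 = 1) (p q : ZMod 2) :
    x ^ (p + q).val = x ^ p.val * x ^ q.val := by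
  have hmod : ∀ n, x ^ (n % 2) = x ^ n := fun n => by
    conv_rhs => rw [← Nat.mod_add_div n 2]
    rw [pow_add, pow_mul, h, one_pow, mul_one]
  rw [ZMod.val_add, hmod, pow_add]

lemma expand : ∀ v : V, v = gapp (ee 0) (ee 1) (ee 2) v := by decide

/-- endomorphism of `V` determined by images of the basis -/
def mkV (t0 t1 t2 : V) : V →* V where
  toFun := gapp t0 t1 t2
  map_one' := by
    show gapp t0 t1 t2 1 = 1
    simp [gapp, ZMod.val_zero, pow_zero]
  map_mul' := fun v w => by
    show gapp t0 t1 t2 (v * w) = gapp t0 t1 t2 v * gapp t0 t1 t2 w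
    have h : ∀ i : Fin 3, Multiplicative.toAdd (v * w) i =
        Multiplicative.toAdd v i + Multiplicative.toAdd w i := fun i => rfl
    unfold gapp
    rw [h 0, h 1, h 2, pow_val_add (sq_V t0), pow_val_add (sq_V t1), pow_val_add (sq_V t2)]
    simp [mul_comm, mul_left_comm, mul_assoc]

lemma homs_ext {G : Type*} [Group G] (f g : V →* G) (h0 : f (ee 0) = g (ee 0))
    (h1 : f (ee 1) = g (ee 1)) (h2 : f (ee 2) = g (ee 2)) : ∀ v, f v = g v := by
  intro v
  conv_lhs => rw [expand v]
  conv_rhs => rw [expand v]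
  simp only [gapp, map_mul, map_pow, h0, h1, h2]

abbrev A4 := alternatingGroup (Fin 4)
abbrev C2 := Multiplicative (ZMod 2)

def c4 : Equiv.Perm (Fin 4) := Equiv.swap 0 1 * Equiv.swap 1 2
def d1 : Equiv.Perm (Fin 4) := Equiv.swap 0 1 * Equiv.swap 2 3
def d2 : Equiv.Perm (Fin 4) := c4 * d1 * c4⁻¹

def γ : A4 × C2 := (⟨c4, Equiv.Perm.mem_alternatingGroup.mpr (by decide)⟩, 1)
def z0 : A4 × C2 := (1, Multiplicative.ofAdd 1)
def z1 : A4 × C2 := (⟨d1, Equiv.Perm.mem_alternatingGroup.mpr (by decide)⟩, 1)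
def z2 : A4 × C2 := (⟨d2, Equiv.Perm.mem_alternatingGroup.mpr (by decide)⟩, 1)

def f₀ : V →* A4 × C2 where
  toFun := gapp z0 z1 z2
  map_one' := by decide
  map_mul' := by decide

lemma f₀_ker : ∀ v : V, f₀ v = 1 → v = 1 := by decide

lemma f₀_equiv : ∀ v : V, f₀ (sfix v) = γ * f₀ v * γ⁻¹ := by decide

lemma γ3 : γ ^ 3 = 1 := by decide

lemma γ_pow_mod : ∀ n, γ ^ (n % 3) = γ ^ n := fun n => by
  conv_rhs => rw [← Nat.mod_add_div n 3]
  rw [pow_add, pow_mul, γ3, one_pow, mul_one]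

def f₂ : Multiplicative (ZMod 3) →* A4 × C2 where
  toFun x := γ ^ (Multiplicative.toAdd x).val
  map_one' := by
    show γ ^ (0 : ZMod 3).val = 1
    rw [ZMod.val_zero, pow_zero]
  map_mul' := fun x y => by
    show γ ^ (Multiplicative.toAdd x + Multiplicative.toAdd y).val = _
    rw [ZMod.val_add, γ_pow_mod, pow_add]

lemma γ_ker : ∀ x : Multiplicative (ZMod 3), γ ^ (Multiplicative.toAdd x).val = 1 → x = 1 := by
  decide

end SdpA4C2Aux

open SdpA4C2Aux in
/-- For every injective group homomorphism `φ` from the cyclic group of order 3 to the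
automorphism group of `(ℤ/2ℤ)^3`, the semidirect product `(ℤ/2ℤ)^3 ⋊[φ] ℤ/3ℤ` is
isomorphic to `A4 × C2`. -/
theorem semidirect_elemAb8_C3_iso_A4_prod_C2
    (φ : Multiplicative (ZMod 3) →* MulAut (Multiplicative (Fin 3 → ZMod 2)))
    (hφ : Function.Injective φ) :
    Nonempty ((Multiplicative (Fin 3 → ZMod 2) ⋊[φ] Multiplicative (ZMod 3)) ≃*
      (alternatingGroup (Fin 4) × Multiplicative (ZMod 2))) := by
  set σ := φ (Multiplicative.ofAdd 1) with hσdef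
  have hσ3 : σ ^ 3 = 1 := by
    rw [hσdef, ← map_pow, show (Multiplicative.ofAdd (1 : ZMod 3)) ^ 3 = 1 by decide, map_one]
  have hσ33 : ∀ v, σ (σ (σ v)) = v := by
    intro v
    have h : (σ ^ 3) v = v := by rw [hσ3]; rfl
    simpa [pow_succ, MulAut.mul_apply] using h
  set s0 := σ (ee 0) with hs0
  set s1 := σ (ee 1) with hs1
  set s2 := σ (ee 2) with hs2
  have happ : ∀ v, σ v = gapp s0 s1 s2 v := by
    intro v
    conv_lhs => rw [expand v]
    simp only [gapp, map_mul, map_pow, hs0, hs1, hs2]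
  have hcore1 : ∀ i : Fin 3, gapp s0 s1 s2 (gapp s0 s1 s2 (σ (ee i))) = ee i := by
    intro i
    rw [← happ, ← happ]
    exact hσ33 (ee i)
  have hne : ¬(s0 = ee 0 ∧ s1 = ee 1 ∧ s2 = ee 2) := by
    rintro ⟨e0, e1, e2⟩
    have hσ1 : σ = 1 := by
      ext v
      rw [show (1 : MulAut V) v = v from rfl, happ v]
      conv_rhs => rw [expand v]
      rw [e0, e1, e2]
    have h2 : φ (Multiplicative.ofAdd (1 : ZMod 3)) = φ 1 := by
      rw [← hσdef, hσ1, map_one]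
    exact absurd (hφ h2) (by decide)
  obtain ⟨t0, t1, t2, hker, he0, he1, he2⟩ :=
    core s0 s1 s2 (hcore1 0) (hcore1 1) (hcore1 2) hne
  set τ : V →* V := mkV t0 t1 t2 with hτ
  have hτapp : ∀ v, τ v = gapp t0 t1 t2 v := fun v => rfl
  set f₁ : V →* A4 × C2 := f₀.comp τ with hf₁
  have hf₁inj : ∀ v, f₁ v = 1 → v = 1 := by
    intro v h
    exact hker v (f₀_ker (τ v) h)
  -- equivariance
  have hts : ∀ v, τ (σ v) = sfix (τ v) := by
    have := homs_ext (τ.comp (MulEquiv.toMonoidHom σ)) ((mkV (ee 0) (ee 2) (ee 1 * ee 2)).comp τ)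
      (by exact he0) (by exact he1) (by exact he2)
    intro v
    exact this v
  have hfs : ∀ v, f₁ (σ v) = γ * f₁ v * γ⁻¹ := by
    intro v
    show f₀ (τ (σ v)) = γ * f₀ (τ v) * γ⁻¹
    rw [hts, f₀_equiv]
  have hfsn : ∀ (n : ℕ) (v : V), f₁ ((σ ^ n) v) = γ ^ n * f₁ v * (γ ^ n)⁻¹ := by
    intro n
    induction n with
    | zero => intro v; simp [show ((σ ^ 0 : MulAut V)) v = v from rfl]
    | succ k ih =>
      intro v
      have h : (σ ^ (k + 1)) v = (σ ^ k) (σ v) := by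
        rw [pow_succ]; rfl
      rw [h, ih, hfs]
      group
  have hφx : ∀ x : Multiplicative (ZMod 3), φ x = σ ^ (Multiplicative.toAdd x).val := by
    intro x
    rw [hσdef, ← map_pow]
    congr 1
    have hsm : ((Multiplicative.toAdd x).val • (1 : ZMod 3)) = Multiplicative.toAdd x := by
      rw [nsmul_eq_mul, mul_one, ZMod.natCast_val, ZMod.cast_id]
    rw [← ofAdd_nsmul, hsm]
    exact (ofAdd_toAdd x).symm
  have compat : ∀ g : Multiplicative (ZMod 3),
      f₁.comp (MulEquiv.toMonoidHom (φ g)) =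
        (MulEquiv.toMonoidHom (MulAut.conj (f₂ g))).comp f₁ := by
    intro g
    apply MonoidHom.ext
    intro v
    show f₁ ((φ g) v) = MulAut.conj (f₂ g) (f₁ v)
    rw [hφx g]
    exact hfsn (Multiplicative.toAdd g).val v
  set Ψ := SemidirectProduct.lift f₁ f₂ compat with hΨ
  have hinj : Function.Injective Ψ := by
    rw [injective_iff_map_eq_one]
    rintro ⟨n, g⟩ hx
    rw [SemidirectProduct.mk_eq_inl_mul_inr, map_mul, SemidirectProduct.lift_inl,
      SemidirectProduct.lift_inr] at hx
    have hu2 : (f₁ n) ^ 2 = 1 := by rw [← map_pow, sq_V, map_one]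
    have hx3 : (f₂ g) ^ 3 = 1 := by
      show (γ ^ (Multiplicative.toAdd g).val) ^ 3 = 1
      rw [← pow_mul, mul_comm, pow_mul, γ3, one_pow]
    have hfn : f₁ n = (f₂ g)⁻¹ := by
      rw [eq_inv_iff_mul_eq_one]; exact hx
    have hg2 : (f₂ g) ^ 2 = 1 := by
      have : ((f₂ g)⁻¹) ^ 2 = 1 := by rw [← hfn]; exact hu2
      simpa using this
    have hg1 : f₂ g = 1 := by
      calc f₂ g = (f₂ g) ^ 3 * ((f₂ g) ^ 2)⁻¹ := by group
      _ = 1 := by rw [hx3, hg2]; simp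
    have hn1 : n = 1 := hf₁inj n (by rw [hfn, hg1]; simp)
    have hgg : g = 1 := γ_ker g hg1
    rw [hn1, hgg]
    rfl
  let E : (V ⋊[φ] Multiplicative (ZMod 3)) ≃ (V × Multiplicative (ZMod 3)) :=
    ⟨fun x => (x.left, x.right), fun p => ⟨p.1, p.2⟩, fun x => by cases x; rfl, fun p => rfl⟩
  haveI : Fintype (V ⋊[φ] Multiplicative (ZMod 3)) := Fintype.ofEquiv _ E.symm
  have hA4 : Fintype.card (alternatingGroup (Fin 4)) = 12 := by
    have h := two_mul_card_alternatingGroup (α := Fin 4)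
    rw [Fintype.card_perm, Fintype.card_fin, show Nat.factorial 4 = 24 from rfl] at h
    omega
  have hcard : Fintype.card (V ⋊[φ] Multiplicative (ZMod 3)) = Fintype.card (A4 × C2) := by
    have hV : Fintype.card V = 8 := by
      rw [Fintype.card_multiplicative, Fintype.card_fun, ZMod.card, Fintype.card_fin]
      norm_num
    have hC2 : Fintype.card C2 = 2 := by rw [Fintype.card_multiplicative, ZMod.card]
    have hM3 : Fintype.card (Multiplicative (ZMod 3)) = 3 := by
      rw [Fintype.card_multiplicative, ZMod.card]
    rw [Fintype.card_congr E, Fintype.card_prod, Fintype.card_prod, hV, hC2, hM3, hA4]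
  exact ⟨MulEquiv.ofBijective Ψ
    ((Fintype.bijective_iff_injective_and_card Ψ).mpr ⟨hinj, hcard⟩)⟩
end

section
/- For every injective group homomorphism φ from the cyclic group ℤ/3ℤ to the automorphism group of the quaternion group Q8, the semidirect product Q8 ⋊_φ ℤ/3ℤ is isomorphic to SL(2,3), the special linear group of 2×2 matrices of determinant 1 over the field with three elements. -/
open Matrix QuaternionGroup Multiplicative

abbrev Q8' := QuaternionGroup 2
abbrev SL23 := Matrix.SpecialLinearGroup (Fin 2) (ZMod 3)

instance : DecidableEq SL23 := fun a b =>
  decidable_of_iff (a.1 = b.1) Subtype.ext_iff.symm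

instance sdpFintype {N G : Type*} [Group N] [Group G] [Fintype N] [Fintype G]
    (φ : G →* MulAut N) : Fintype (N ⋊[φ] G) :=
  Fintype.ofEquiv (N × G)
    ⟨fun p => ⟨p.1, p.2⟩, fun z => (z.left, z.right), fun _ => rfl, fun _ => rfl⟩

def Amat : SL23 := ⟨!![0, -1; 1, 0], by decide⟩
def Jmat : SL23 := ⟨!![1, 1; 1, -1], by decide⟩

def F : Q8' → SL23
  | .a i => Amat ^ i.val
  | .xa i => Jmat * Amat ^ i.val

theorem F_mul : ∀ p q : Q8', F (p * q) = F p * F q := by decide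

def Af (x y : Q8') : Q8' → Q8'
  | .a i => x ^ i.val
  | .xa i => y * x ^ i.val

set_option maxRecDepth 10000 in
theorem key : ∀ x y : Q8',
    (∀ p q : Q8', Af x y (p * q) = Af x y p * Af x y q) →
    (∀ q, Af x y (Af x y (Af x y q)) = q) →
    (¬ ∀ q, Af x y q = q) →
    ∃ t : SL23, t ^ 3 = 1 ∧ (∀ q, F (Af x y q) = t * F q * t⁻¹) ∧
      (∀ (q : Q8') (v : Fin 3), F q * t ^ (v : ℕ) = 1 → q = 1 ∧ v = 0) := by decide

/-- For every injective group homomorphism `φ` from the cyclic group of order 3 to the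
automorphism group of `Q8`, the semidirect product `Q8 ⋊[φ] ℤ/3ℤ` is isomorphic to
`SL(2,3)`. -/
theorem semidirect_Q8_C3_iso_SL23
    (φ : Multiplicative (ZMod 3) →* MulAut (QuaternionGroup 2))
    (hφ : Function.Injective φ) :
    Nonempty ((QuaternionGroup 2 ⋊[φ] Multiplicative (ZMod 3)) ≃*
      Matrix.SpecialLinearGroup (Fin 2) (ZMod 3)) := by
  set g₀ : Multiplicative (ZMod 3) := ofAdd 1 with hg₀
  set α : MulAut Q8' := φ g₀ with hα
  have hg03 : g₀ ^ 3 = 1 := by decide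
  have hα3 : α ^ 3 = 1 := by rw [hα, ← _root_.map_pow, hg03, _root_.map_one]
  have hαne : α ≠ 1 := by
    intro h
    have : g₀ = 1 := hφ (by rw [← hα, h, _root_.map_one])
    exact absurd this (by decide)
  set x : Q8' := α (a 1) with hx
  set y : Q8' := α (xa 0) with hy
  -- pointwise description of α
  have hcast : ∀ i : ZMod 4, ((i.val : ℕ) : ZMod (2 * 2)) = i := by decide
  have hpt : ∀ q : Q8', α q = Af x y q := by
    intro q
    match q with
    | .a i =>
      show α (a i) = x ^ i.val
      rw [hx, ← _root_.map_pow, a_one_pow, hcast]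
    | .xa i =>
      have h1 : (xa 0 : Q8') * a i = xa i := by rw [xa_mul_a, zero_add]
      show α (xa i) = y * x ^ i.val
      rw [← h1, _root_.map_mul, hy, hx, ← _root_.map_pow, a_one_pow, hcast]
  have hmul : ∀ p q : Q8', Af x y (p * q) = Af x y p * Af x y q := by
    intro p q; rw [← hpt, ← hpt, ← hpt, _root_.map_mul]
  have hcube : ∀ q, Af x y (Af x y (Af x y q)) = q := by
    intro q
    rw [← hpt, ← hpt, ← hpt]
    have h3 : α (α (α q)) = (α ^ 3) q := by
      rw [pow_succ, pow_succ, pow_one]; rfl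
    rw [h3, hα3]; rfl
  have hne : ¬ ∀ q, Af x y q = q := by
    intro h
    exact hαne (MulEquiv.ext fun q => by rw [hpt, h]; rfl)
  obtain ⟨t, ht3, hconj, hker⟩ := key x y hmul hcube hne
  -- conjugation formula for α itself
  have hconj' : ∀ q, F (α q) = t * F q * t⁻¹ := fun q => by rw [hpt]; exact hconj q
  -- conjugation formula for powers of α
  have hconjpow : ∀ (n : ℕ) (q : Q8'), F ((α ^ n) q) = t ^ n * F q * (t ^ n)⁻¹ := by
    intro n
    induction n with
    | zero => intro q; simp
    | succ n ih =>
      intro q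
      have h1 : (α ^ (n + 1)) q = (α ^ n) (α q) := by
        rw [pow_succ]; rfl
      rw [h1, ih, hconj']
      group
  -- the monoid homs
  have Fhom : Q8' →* SL23 := MonoidHom.mk' F F_mul
  have hpow3 : ∀ (u v : ZMod 3), t ^ ((u + v).val) = t ^ u.val * t ^ v.val := by
    intro u v
    rw [← pow_add, ZMod.val_add, ← pow_eq_pow_mod _ ht3]
  have g : Multiplicative (ZMod 3) →* SL23 :=
    MonoidHom.mk' (fun c => t ^ (toAdd c).val) (by
      intro a b
      show t ^ ((toAdd a + toAdd b).val) = _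
      exact hpow3 _ _)
  -- φ c = α ^ val
  have hgen : ∀ c : Multiplicative (ZMod 3), g₀ ^ (toAdd c).val = c := by decide
  have hφc : ∀ c : Multiplicative (ZMod 3), φ c = α ^ (toAdd c).val := by
    intro c; rw [hα, ← _root_.map_pow, hgen]
  have compat : ∀ c, (MonoidHom.mk' F F_mul).comp (φ c).toMonoidHom
      = (MulAut.conj (MonoidHom.mk' (fun c => t ^ (toAdd c).val)
          (fun a b => hpow3 (toAdd a) (toAdd b)) c)).toMonoidHom.comp
        (MonoidHom.mk' F F_mul) := by
    intro c
    refine MonoidHom.ext fun q => ?_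
    show F ((φ c) q) = t ^ (toAdd c).val * F q * (t ^ (toAdd c).val)⁻¹
    rw [hφc]
    exact hconjpow _ q
  set Φ := SemidirectProduct.lift (MonoidHom.mk' F F_mul)
    (MonoidHom.mk' (fun c => t ^ (toAdd c).val)
      (fun a b => hpow3 (toAdd a) (toAdd b))) compat with hΦ
  have hinj : Function.Injective Φ := by
    rw [injective_iff_map_eq_one]
    intro z hz
    have hzval : F z.left * t ^ (toAdd z.right).val = 1 := hz
    have hlt : (toAdd z.right).val < 3 := ZMod.val_lt _
    have := hker z.left ⟨(toAdd z.right).val, hlt⟩ hzval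
    obtain ⟨h1, h2⟩ := this
    have h3 : (toAdd z.right).val = 0 := by
      simpa using congrArg Fin.val h2
    have h4 : z.right = 1 := by
      have := (ZMod.val_eq_zero _).mp h3
      exact toAdd_eq_zero.mp this
    ext
    · exact h1
    · exact h4
  have hcard : Fintype.card (Q8' ⋊[φ] Multiplicative (ZMod 3)) = Fintype.card SL23 := by
    have h1 : Fintype.card (Q8' ⋊[φ] Multiplicative (ZMod 3))
        = Fintype.card (Q8' × Multiplicative (ZMod 3)) := by
      exact (Fintype.ofEquiv_card _)
    rw [h1]
    decide
  exact ⟨MulEquiv.ofBijective Φ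
    ((Fintype.bijective_iff_injective_and_card Φ).mpr ⟨hinj, hcard⟩)⟩
end
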